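/- Let a, b, c > 0 with cN ≥ 1, and let X₁, ..., X_N be identically distributed real random variables such that P(|X₁| ≥ at + bt²) ≤ c·exp(−t²) for all t > 0. Then E[max_{1≤i≤N} X_i²] ≤ (2a² + 8b²) log(ecN) + 2b² log²(cN). -/

import Mathlib

open MeasureTheory Set Filter
open scoped ENNReal NNReal

theorem expectation_max_sq_le_of_subgaussian_tail
    {Ω : Type*} [MeasurableSpace Ω] (μ : Measure Ω) [IsProbabilityMeasure μ]
    (N : ℕ) (a b c : ℝ) (ha : 0 < a) (hb : 0 < b) (hc : 0 < c)
    (hcN : 1 ≤ c * N)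
    (X : Fin N → Ω → ℝ) (hmeas : ∀ i, Measurable (X i))
    (i₀ : Fin N)
    (hident : ∀ i, μ.map (X i) = μ.map (X i₀))
    (htail : ∀ t : ℝ, 0 < t →
      μ {ω | a * t + b * t ^ 2 ≤ |X i₀ ω|} ≤ ENNReal.ofReal (c * Real.exp (-t ^ 2))) :
    ∫ ω, (⨆ i, (X i ω) ^ 2) ∂μ
      ≤ (2 * a ^ 2 + 8 * b ^ 2) * Real.log (Real.exp 1 * c * N)
        + 2 * b ^ 2 * Real.log (c * N) ^ 2 := by
  have hNe : Nonempty (Fin N) := ⟨i₀⟩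
  have hcN0 : (0:ℝ) < c * N := lt_of_lt_of_le one_pos hcN
  set L := Real.log (c * N) with hL
  have hL0 : 0 ≤ L := Real.log_nonneg hcN
  set t₀ := Real.sqrt L with ht₀def
  have ht₀ : 0 ≤ t₀ := Real.sqrt_nonneg _
  have ht₀sq : t₀ ^ 2 = L := Real.sq_sqrt hL0
  set g : ℝ → ℝ := fun s => 2*a^2*s^2 + 2*b^2*s^4 with hg
  set g' : ℝ → ℝ := fun s => 4*a^2*s + 8*b^2*s^3 with hg'
  set Y : Ω → ℝ := fun ω => ⨆ i, (X i ω)^2 with hY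
  -- basic facts about Y
  have hYmeas : Measurable Y := by
    have h1 : Y = fun ω => Finset.univ.sup' Finset.univ_nonempty (fun i => (X i ω)^2) := by
      funext ω; rw [hY, Finset.sup'_univ_eq_ciSup]
    rw [h1]
    have := Finset.measurable_sup' (s := (Finset.univ : Finset (Fin N)))
      Finset.univ_nonempty (f := fun i (ω : Ω) => (X i ω)^2)
      (fun i _ => (hmeas i).pow_const 2)
    convert this using 1
    funext ω
    rw [Finset.sup'_apply]
  have hYnn : ∀ ω, 0 ≤ Y ω := by
    intro ω
    have := le_ciSup (f := fun i => (X i ω)^2) (Set.Finite.bddAbove (Set.finite_range _)) i₀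
    exact le_trans (sq_nonneg _) this
  -- tail bound for Y
  have tail : ∀ s : ℝ, 0 < s →
      μ {ω | g s ≤ Y ω} ≤ ENNReal.ofReal (c * N * Real.exp (-s^2)) := by
    intro s hs
    have hks : 0 ≤ a*s + b*s^2 :=
      add_nonneg (mul_nonneg ha.le hs.le) (mul_nonneg hb.le (sq_nonneg s))
    have hsub : {ω | g s ≤ Y ω} ⊆ ⋃ i, {ω | a*s + b*s^2 ≤ |X i ω|} := by
      intro ω hω
      obtain ⟨i, hi⟩ := Finite.exists_max (fun i => (X i ω)^2)
      have hYle : Y ω ≤ (X i ω)^2 := ciSup_le hi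
      have hgle : (a*s + b*s^2)^2 ≤ g s := by
        simp only [hg]; nlinarith [sq_nonneg (a*s - b*s^2)]
      have hsq : (a*s + b*s^2)^2 ≤ (X i ω)^2 := hgle.trans (le_trans hω hYle)
      have habs : a*s + b*s^2 ≤ |X i ω| := by
        calc a*s + b*s^2 = Real.sqrt ((a*s + b*s^2)^2) := (Real.sqrt_sq hks).symm
          _ ≤ Real.sqrt ((X i ω)^2) := Real.sqrt_le_sqrt hsq
          _ = |X i ω| := Real.sqrt_sq_eq_abs _
      exact Set.mem_iUnion.2 ⟨i, habs⟩
    have hAmeas : MeasurableSet {x : ℝ | a*s + b*s^2 ≤ |x|} :=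
      measurableSet_le measurable_const measurable_id.abs
    have hone : ∀ i : Fin N, μ {ω | a*s + b*s^2 ≤ |X i ω|}
        ≤ ENNReal.ofReal (c * Real.exp (-s^2)) := by
      intro i
      have h1 : μ {ω | a*s + b*s^2 ≤ |X i ω|} = (μ.map (X i)) {x | a*s + b*s^2 ≤ |x|} := by
        rw [Measure.map_apply (hmeas i) hAmeas]; rfl
      rw [h1, hident i, Measure.map_apply (hmeas i₀) hAmeas]
      exact htail s hs
    calc μ {ω | g s ≤ Y ω} ≤ μ (⋃ i, {ω | a*s + b*s^2 ≤ |X i ω|}) := measure_mono hsub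
      _ ≤ ∑ i : Fin N, μ {ω | a*s + b*s^2 ≤ |X i ω|} := measure_iUnion_fintype_le _ _
      _ ≤ ∑ i : Fin N, ENNReal.ofReal (c * Real.exp (-s^2)) :=
          Finset.sum_le_sum (fun i _ => hone i)
      _ = (N : ℝ≥0∞) * ENNReal.ofReal (c * Real.exp (-s^2)) := by
          simp [Finset.sum_const, Finset.card_univ, nsmul_eq_mul]
      _ = ENNReal.ofReal (c * N * Real.exp (-s^2)) := by
          rw [← ENNReal.ofReal_natCast N, ← ENNReal.ofReal_mul (Nat.cast_nonneg N)]
          congr 1; ring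
  -- derivative facts
  have hgderiv : ∀ s : ℝ, HasDerivAt g (g' s) s := by
    intro s
    have h := ((hasDerivAt_pow 2 s).const_mul (2*a^2)).add
      ((hasDerivAt_pow 4 s).const_mul (2*b^2))
    exact h.congr_deriv (by simp only [hg']; norm_num; ring)
  have hg'cont : Continuous g' := by rw [hg']; fun_prop
  have hg'nn : ∀ s : ℝ, 0 ≤ s → 0 ≤ g' s := fun s hs => by
    simp only [hg']
    exact add_nonneg (mul_nonneg (by positivity) hs)
      (mul_nonneg (by positivity) (pow_nonneg hs 3))
  -- injectivity and image of g on Ioi 0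
  have hmono : StrictMonoOn g (Ioi 0) := by
    intro x hx y hy hxy
    have hx0 : (0:ℝ) < x := hx
    have hy0 : (0:ℝ) < y := hy
    simp only [hg]
    have h2 : x^2 < y^2 := by nlinarith
    have h4 : x^4 < y^4 := by nlinarith
    nlinarith [sq_nonneg a, sq_nonneg b, pow_pos ha 2, pow_pos hb 2]
  have hinj : Set.InjOn g (Ioi 0) := hmono.injOn
  have hgcont : Continuous g := by rw [hg]; fun_prop
  have himg : g '' Ioi 0 = Ioi 0 := by
    apply Subset.antisymm
    · rintro u ⟨s, hs, rfl⟩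
      have hs0 : (0:ℝ) < s := hs
      have : 0 < g s := by
        simp only [hg]
        have h1 : 0 < 2*a^2*s^2 := by positivity
        have h2 : 0 ≤ 2*b^2*s^4 := by positivity
        linarith
      exact this
    · intro u hu
      have hu0 : (0:ℝ) < u := hu
      set M := max 1 (u / (2*a^2)) with hM
      have hM1 : (1:ℝ) ≤ M := le_max_left _ _
      have hM0 : (0:ℝ) ≤ M := zero_le_one.trans hM1
      have hgM : u ≤ g M := by
        have h2 : u / (2*a^2) ≤ M := le_max_right _ _
        have h3 : u ≤ 2*a^2 * M := by
          rw [div_le_iff₀ (by positivity)] at h2; linarith [h2]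
        simp only [hg]; nlinarith [sq_nonneg b, pow_nonneg hM0 4]
      have hmem : u ∈ Icc (g 0) (g M) := by
        constructor
        · simp only [hg]; simpa using hu0.le
        · exact hgM
      obtain ⟨s, hsm, hgs⟩ := intermediate_value_Icc hM0 hgcont.continuousOn hmem
      refine ⟨s, ?_, hgs⟩
      rcases eq_or_lt_of_le hsm.1 with h | h
      · exfalso
        rw [← h] at hgs
        simp only [hg] at hgs
        simp at hgs
        linarith [hu0, hgs]
      · exact h
  -- layer cake
  have layer : ∫⁻ ω, ENNReal.ofReal (Y ω) ∂μ = ∫⁻ t in Ioi 0, μ {ω | t ≤ Y ω} :=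
    lintegral_eq_lintegral_meas_le μ (Eventually.of_forall hYnn) hYmeas.aemeasurable
  -- change of variables
  have cov : ∫⁻ t in Ioi 0, μ {ω | t ≤ Y ω}
      = ∫⁻ s in Ioi 0, ENNReal.ofReal |g' s| * μ {ω | g s ≤ Y ω} := by
    conv_lhs => rw [← himg]
    simpa only [ContinuousLinearMap.det_toSpanSingleton] using
      lintegral_image_eq_lintegral_abs_det_fderiv_mul volume measurableSet_Ioi
        (fun x hx => ((hgderiv x).hasDerivWithinAt).hasFDerivWithinAt) hinj
        (fun t => μ {ω | t ≤ Y ω})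
  -- split
  have hsplit : ∫⁻ s in Ioi 0, ENNReal.ofReal |g' s| * μ {ω | g s ≤ Y ω}
      = (∫⁻ s in Ioc 0 t₀, ENNReal.ofReal |g' s| * μ {ω | g s ≤ Y ω})
        + ∫⁻ s in Ioi t₀, ENNReal.ofReal |g' s| * μ {ω | g s ≤ Y ω} := by
    rw [← Ioc_union_Ioi_eq_Ioi ht₀, lintegral_union measurableSet_Ioi (Ioc_disjoint_Ioi le_rfl)]
  -- piece 1
  have p1 : ∫⁻ s in Ioc 0 t₀, ENNReal.ofReal |g' s| * μ {ω | g s ≤ Y ω}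
      ≤ ENNReal.ofReal (2*a^2*L + 2*b^2*L^2) := by
    have hb1 : ∀ s ∈ Ioc (0:ℝ) t₀, ENNReal.ofReal |g' s| * μ {ω | g s ≤ Y ω}
        ≤ ENNReal.ofReal (g' s) := by
      intro s hs
      rw [abs_of_nonneg (hg'nn s hs.1.le)]
      calc ENNReal.ofReal (g' s) * μ {ω | g s ≤ Y ω}
          ≤ ENNReal.ofReal (g' s) * 1 := mul_le_mul_right prob_le_one _
        _ = ENNReal.ofReal (g' s) := mul_one _
    calc ∫⁻ s in Ioc 0 t₀, ENNReal.ofReal |g' s| * μ {ω | g s ≤ Y ω}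
        ≤ ∫⁻ s in Ioc 0 t₀, ENNReal.ofReal (g' s) :=
          setLIntegral_mono (ENNReal.measurable_ofReal.comp hg'cont.measurable) hb1
      _ = ENNReal.ofReal (∫ s in Ioc 0 t₀, g' s) := by
          rw [ofReal_integral_eq_lintegral_ofReal (hg'cont.integrableOn_Ioc)
            (ae_restrict_of_forall_mem measurableSet_Ioc (fun s hs => hg'nn s hs.1.le))]
      _ = ENNReal.ofReal (2*a^2*L + 2*b^2*L^2) := by
          rw [← intervalIntegral.integral_of_le ht₀,
            intervalIntegral.integral_eq_sub_of_hasDerivAt (fun x _ => hgderiv x)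
              (hg'cont.intervalIntegrable 0 t₀)]
          congr 1
          simp only [hg]
          rw [show t₀^4 = (t₀^2)^2 by ring, ht₀sq]
          ring
  -- integrability for piece 2
  have hint_pow : ∀ n : ℕ, Integrable (fun x : ℝ => x ^ n * Real.exp (-x^2)) := by
    intro n
    have h := integrable_rpow_mul_exp_neg_mul_sq (b := 1) one_pos
      (s := n) (lt_of_lt_of_le neg_one_lt_zero (Nat.cast_nonneg n))
    simpa [Real.rpow_natCast, neg_mul, one_mul] using h
  have hInt : Integrable (fun s : ℝ => g' s * (c * N * Real.exp (-s^2))) := by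
    have h1 := (hint_pow 1).const_mul (4*a^2*(c*N))
    have h3 := (hint_pow 3).const_mul (8*b^2*(c*N))
    have heq : (fun s : ℝ => g' s * (c * N * Real.exp (-s^2)))
        = fun s : ℝ => 4*a^2*(c*N) * (s^1 * Real.exp (-s^2))
          + 8*b^2*(c*N) * (s^3 * Real.exp (-s^2)) := by
      funext s; simp only [hg']; ring
    rw [heq]
    exact h1.add h3
  -- antiderivative for piece 2
  set F : ℝ → ℝ := fun s => -((c*N) * (2*a^2 + 4*b^2*(s^2+1)) * Real.exp (-s^2)) with hF
  have hFd : ∀ s : ℝ, HasDerivAt F (g' s * (c * N * Real.exp (-s^2))) s := by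
    intro s
    have hP : HasDerivAt (fun s : ℝ => 2*a^2 + 4*b^2*(s^2+1)) (4*b^2*(2*s)) s := by
      have := (((hasDerivAt_pow 2 s).add_const 1).const_mul (4*b^2)).const_add (2*a^2)
      exact this.congr_deriv (by norm_num)
    have hE : HasDerivAt (fun s : ℝ => Real.exp (-s^2)) (Real.exp (-s^2) * (-(2*s))) s := by
      have h2 : HasDerivAt (fun s : ℝ => -s^2) (-(2*s)) s := by
        have := (hasDerivAt_pow 2 s).neg
        exact this.congr_deriv (by norm_num)
      exact h2.exp
    have := ((hP.mul hE).const_mul (c*N)).neg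
    refine (this.congr_deriv ?_).congr_of_eventuallyEq (Eventually.of_forall fun x => ?_)
    · simp only [hg']; ring
    · simp only [hF, Pi.neg_apply, Pi.mul_apply]; ring
  have hFtend : Tendsto F atTop (nhds 0) := by
    have h1 : Tendsto (fun s : ℝ => s^2) atTop atTop := tendsto_pow_atTop two_ne_zero
    have h2 : Tendsto (fun s : ℝ => Real.exp (-s^2)) atTop (nhds 0) :=
      (Real.tendsto_exp_neg_atTop_nhds_zero).comp h1
    have h3 : Tendsto (fun s : ℝ => s^2 * Real.exp (-s^2)) atTop (nhds 0) := by
      have := (Real.tendsto_pow_mul_exp_neg_atTop_nhds_zero 1).comp h1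
      simpa [Function.comp_def] using this
    have heq : F = fun s : ℝ => -((c*N) * (2*a^2 + 4*b^2)) * Real.exp (-s^2)
        + (-((c*N) * (4*b^2))) * (s^2 * Real.exp (-s^2)) := by
      funext s; simp only [hF]; ring
    rw [heq]
    have := ((h2.const_mul (-((c*N) * (2*a^2 + 4*b^2)))).add
      (h3.const_mul (-((c*N) * (4*b^2)))))
    simpa using this
  have hIoi : ∫ s in Ioi t₀, g' s * (c * N * Real.exp (-s^2)) = 2*a^2 + 4*b^2*(L+1) := by
    rw [integral_Ioi_of_hasDerivAt_of_tendsto' (fun x _ => hFd x) hInt.integrableOn hFtend]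
    simp only [hF]
    rw [ht₀sq]
    have hexp : Real.exp (-L) = (c*N)⁻¹ := by
      rw [Real.exp_neg, hL, Real.exp_log hcN0]
    rw [hexp]
    have hN0 : (N:ℝ) ≠ 0 := by rintro h; rw [h] at hcN0; simp at hcN0
    field_simp
    ring
  -- piece 2
  have p2 : ∫⁻ s in Ioi t₀, ENNReal.ofReal |g' s| * μ {ω | g s ≤ Y ω}
      ≤ ENNReal.ofReal (2*a^2 + 4*b^2*(L+1)) := by
    have hb2 : ∀ s ∈ Ioi t₀, ENNReal.ofReal |g' s| * μ {ω | g s ≤ Y ω}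
        ≤ ENNReal.ofReal (g' s * (c * N * Real.exp (-s^2))) := by
      intro s hs
      have hs0 : 0 < s := lt_of_le_of_lt ht₀ hs
      rw [abs_of_nonneg (hg'nn s hs0.le), ENNReal.ofReal_mul (hg'nn s hs0.le)]
      exact mul_le_mul_right (tail s hs0) _
    calc ∫⁻ s in Ioi t₀, ENNReal.ofReal |g' s| * μ {ω | g s ≤ Y ω}
        ≤ ∫⁻ s in Ioi t₀, ENNReal.ofReal (g' s * (c * N * Real.exp (-s^2))) :=
          setLIntegral_mono (ENNReal.measurable_ofReal.comp (by fun_prop)) hb2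
      _ = ENNReal.ofReal (∫ s in Ioi t₀, g' s * (c * N * Real.exp (-s^2))) := by
          rw [ofReal_integral_eq_lintegral_ofReal hInt.integrableOn
            (ae_restrict_of_forall_mem measurableSet_Ioi (fun s hs =>
              mul_nonneg (hg'nn s (le_trans ht₀ hs.le))
                (mul_nonneg hcN0.le (Real.exp_pos _).le)))]
      _ = ENNReal.ofReal (2*a^2 + 4*b^2*(L+1)) := by rw [hIoi]
  -- log identity
  have hlog : Real.log (Real.exp 1 * c * N) = 1 + L := by
    rw [mul_assoc, Real.log_mul (Real.exp_ne_zero 1) (ne_of_gt hcN0), Real.log_exp, hL]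
  -- final bound on lintegral
  have hsum : (2*a^2*L + 2*b^2*L^2) + (2*a^2 + 4*b^2*(L+1))
      ≤ (2*a^2 + 8*b^2) * (1 + L) + 2*b^2*L^2 := by nlinarith [sq_nonneg b]
  have key : ∫⁻ ω, ENNReal.ofReal (Y ω) ∂μ
      ≤ ENNReal.ofReal ((2*a^2 + 8*b^2) * Real.log (Real.exp 1 * c * N) + 2*b^2*L^2) := by
    rw [layer, cov, hsplit, hlog]
    calc _ ≤ ENNReal.ofReal (2*a^2*L + 2*b^2*L^2) + ENNReal.ofReal (2*a^2 + 4*b^2*(L+1)) :=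
          add_le_add p1 p2
      _ = ENNReal.ofReal ((2*a^2*L + 2*b^2*L^2) + (2*a^2 + 4*b^2*(L+1))) := by
          rw [← ENNReal.ofReal_add (by positivity) (by positivity)]
      _ ≤ _ := ENNReal.ofReal_le_ofReal hsum
  have hRnn : 0 ≤ (2*a^2 + 8*b^2) * Real.log (Real.exp 1 * c * N) + 2*b^2*L^2 := by
    rw [hlog]; positivity
  rw [show (∫ ω, (⨆ i, (X i ω) ^ 2) ∂μ) = ∫ ω, Y ω ∂μ from rfl,
    integral_eq_lintegral_of_nonneg_ae (Eventually.of_forall hYnn) hYmeas.aestronglyMeasurable]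
  exact ENNReal.toReal_le_of_le_ofReal hRnn key
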